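/- For every x ∈ L and every r ∈ {1, 2, 3, -1, -2, -3}, one has ⟨x + r·f | x + r·f⟩ ≥ 2/7. -/
import Mathlib


noncomputable section

/-- The bilinear form `⟨x|y⟩ = (1/8) ∑ i, x i * y i` on `ℚ^24`. -/
def B (x y : Fin 24 → ℚ) : ℚ := (1/8) * ∑ i, x i * y i

def v1 : Fin 24 → ℚ :=
  (1/7 : ℚ) • ![0,4,4,4,4,4,4,4, 0,4,4,4,4,4,4,4, 0,0,0,0,0,0,0,0]
def v2 : Fin 24 → ℚ :=
  (1/7 : ℚ) • ![0,0,0,0,0,0,0,0, 0,4,4,4,4,4,4,4, 0,4,4,4,4,4,4,4]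
def v3 : Fin 24 → ℚ :=
  (1/7 : ℚ) • ![0,4,4,4,4,4,4,4, 0,-4,-4,-4,-4,-4,-4,-4, 0,0,0,0,0,0,0,0]
def v4 : Fin 24 → ℚ :=
  (1/7 : ℚ) • ![-14,2,2,2,2,2,2,2, 0,0,0,0,0,0,0,0, 0,0,0,0,0,0,0,0]
def v5 : Fin 24 → ℚ :=
  (1/7 : ℚ) • ![0,0,0,0,0,0,0,0, -14,2,2,2,2,2,2,2, 0,0,0,0,0,0,0,0]
def v6 : Fin 24 → ℚ :=
  (1/7 : ℚ) • ![-7,1,1,1,1,1,1,1, -7,1,1,1,1,1,1,1, -7,-3,-3,-3,-3,-3,-3,-3]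

/-- `L` is the ℤ-span of `v1, …, v6` in `ℚ^24`. -/
def L : Submodule ℤ (Fin 24 → ℚ) :=
  Submodule.span ℤ {v1, v2, v3, v4, v5, v6}

def f : Fin 24 → ℚ :=
  (1/7 : ℚ) • ![5,1,1,1,1,1,1,1, 1,1,1,1,1,1,1,1, 3,3,3,3,3,3,3,3]

def β0 : Fin 24 → ℚ :=
  (1/7 : ℚ) • ![-9,-1,-1,-1,-1,-1,-1,-1, 1,1,1,1,1,1,1,1, 3,-1,-1,-1,-1,-1,-1,-1]
def β2 : Fin 24 → ℚ :=
  (1/7 : ℚ) • ![-2,-2,-2,-2,-2,-2,-2,-2, -6,-2,-2,-2,-2,-2,-2,-2, -4,0,0,0,0,0,0,0]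
def β3 : Fin 24 → ℚ :=
  (1/7 : ℚ) • ![-2,2,2,2,2,2,2,2, 8,0,0,0,0,0,0,0, -4,0,0,0,0,0,0,0]
def β4 : Fin 24 → ℚ :=
  (1/7 : ℚ) • ![5,-3,-3,-3,-3,-3,-3,-3, 1,1,1,1,1,1,1,1, 3,-1,-1,-1,-1,-1,-1,-1]
def β5 : Fin 24 → ℚ :=
  (1/7 : ℚ) • ![-2,2,2,2,2,2,2,2, -6,2,2,2,2,2,2,2, -4,0,0,0,0,0,0,0]
def β6 : Fin 24 → ℚ :=
  (1/7 : ℚ) • ![5,1,1,1,1,1,1,1, 1,-3,-3,-3,-3,-3,-3,-3, 3,-1,-1,-1,-1,-1,-1,-1]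

/-- `β i` for `i = 0, …, 6`, with `β 1 = f`. -/
def β : Fin 7 → (Fin 24 → ℚ) := ![β0, f, β2, β3, β4, β5, β6]

/-- for every `x ∈ L` and `r ∈ {1,2,3,-1,-2,-3}`, `⟨x+rf|x+rf⟩ ≥ 2/7`. -/
lemma B_smul_left (a : ℚ) (x z : Fin 24 → ℚ) : B (a • x) z = a * B x z := by
  simp only [B, Pi.smul_apply, smul_eq_mul, Finset.mul_sum, mul_assoc]
  exact Finset.sum_congr rfl fun i _ => by ring

lemma B_add_left (x y z : Fin 24 → ℚ) : B (x + y) z = B x z + B y z := by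
  simp only [B, Pi.add_apply, add_mul, Finset.sum_add_distrib, mul_add]

lemma B_comm (x y : Fin 24 → ℚ) : B x y = B y x := by
  simp only [B]; congr 1; exact Finset.sum_congr rfl fun i _ => mul_comm _ _

lemma B_zsmul_left (n : ℤ) (x z : Fin 24 → ℚ) : B (n • x) z = (n:ℚ) * B x z := by
  rw [← Int.cast_smul_eq_zsmul ℚ n x, B_smul_left]

lemma gv1v1 : B v1 v1 = (4/7) := by
  norm_num [B, v1, v2, v3, v4, v5, v6, f, Fin.sum_univ_succ, Matrix.cons_val_zero, Matrix.cons_val_succ, Pi.smul_apply, smul_eq_mul]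
lemma gv1v2 : B v1 v2 = (2/7) := by
  norm_num [B, v1, v2, v3, v4, v5, v6, f, Fin.sum_univ_succ, Matrix.cons_val_zero, Matrix.cons_val_succ, Pi.smul_apply, smul_eq_mul]
lemma gv1v3 : B v1 v3 = (0) := by
  norm_num [B, v1, v2, v3, v4, v5, v6, f, Fin.sum_univ_succ, Matrix.cons_val_zero, Matrix.cons_val_succ, Pi.smul_apply, smul_eq_mul]
lemma gv1v4 : B v1 v4 = (1/7) := by
  norm_num [B, v1, v2, v3, v4, v5, v6, f, Fin.sum_univ_succ, Matrix.cons_val_zero, Matrix.cons_val_succ, Pi.smul_apply, smul_eq_mul]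
lemma gv1v5 : B v1 v5 = (1/7) := by
  norm_num [B, v1, v2, v3, v4, v5, v6, f, Fin.sum_univ_succ, Matrix.cons_val_zero, Matrix.cons_val_succ, Pi.smul_apply, smul_eq_mul]
lemma gv1v6 : B v1 v6 = (1/7) := by
  norm_num [B, v1, v2, v3, v4, v5, v6, f, Fin.sum_univ_succ, Matrix.cons_val_zero, Matrix.cons_val_succ, Pi.smul_apply, smul_eq_mul]
lemma gv1f : B v1 f = (1/7) := by
  norm_num [B, v1, v2, v3, v4, v5, v6, f, Fin.sum_univ_succ, Matrix.cons_val_zero, Matrix.cons_val_succ, Pi.smul_apply, smul_eq_mul]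
lemma gv2v1 : B v2 v1 = (2/7) := by rw [B_comm]; exact gv1v2
lemma gv2v2 : B v2 v2 = (4/7) := by
  norm_num [B, v1, v2, v3, v4, v5, v6, f, Fin.sum_univ_succ, Matrix.cons_val_zero, Matrix.cons_val_succ, Pi.smul_apply, smul_eq_mul]
lemma gv2v3 : B v2 v3 = (-2/7) := by
  norm_num [B, v1, v2, v3, v4, v5, v6, f, Fin.sum_univ_succ, Matrix.cons_val_zero, Matrix.cons_val_succ, Pi.smul_apply, smul_eq_mul]
lemma gv2v4 : B v2 v4 = (0) := by
  norm_num [B, v1, v2, v3, v4, v5, v6, f, Fin.sum_univ_succ, Matrix.cons_val_zero, Matrix.cons_val_succ, Pi.smul_apply, smul_eq_mul]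
lemma gv2v5 : B v2 v5 = (1/7) := by
  norm_num [B, v1, v2, v3, v4, v5, v6, f, Fin.sum_univ_succ, Matrix.cons_val_zero, Matrix.cons_val_succ, Pi.smul_apply, smul_eq_mul]
lemma gv2v6 : B v2 v6 = (-1/7) := by
  norm_num [B, v1, v2, v3, v4, v5, v6, f, Fin.sum_univ_succ, Matrix.cons_val_zero, Matrix.cons_val_succ, Pi.smul_apply, smul_eq_mul]
lemma gv2f : B v2 f = (2/7) := by
  norm_num [B, v1, v2, v3, v4, v5, v6, f, Fin.sum_univ_succ, Matrix.cons_val_zero, Matrix.cons_val_succ, Pi.smul_apply, smul_eq_mul]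
lemma gv3v1 : B v3 v1 = (0) := by rw [B_comm]; exact gv1v3
lemma gv3v2 : B v3 v2 = (-2/7) := by rw [B_comm]; exact gv2v3
lemma gv3v3 : B v3 v3 = (4/7) := by
  norm_num [B, v1, v2, v3, v4, v5, v6, f, Fin.sum_univ_succ, Matrix.cons_val_zero, Matrix.cons_val_succ, Pi.smul_apply, smul_eq_mul]
lemma gv3v4 : B v3 v4 = (1/7) := by
  norm_num [B, v1, v2, v3, v4, v5, v6, f, Fin.sum_univ_succ, Matrix.cons_val_zero, Matrix.cons_val_succ, Pi.smul_apply, smul_eq_mul]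
lemma gv3v5 : B v3 v5 = (-1/7) := by
  norm_num [B, v1, v2, v3, v4, v5, v6, f, Fin.sum_univ_succ, Matrix.cons_val_zero, Matrix.cons_val_succ, Pi.smul_apply, smul_eq_mul]
lemma gv3v6 : B v3 v6 = (0) := by
  norm_num [B, v1, v2, v3, v4, v5, v6, f, Fin.sum_univ_succ, Matrix.cons_val_zero, Matrix.cons_val_succ, Pi.smul_apply, smul_eq_mul]
lemma gv3f : B v3 f = (0) := by
  norm_num [B, v1, v2, v3, v4, v5, v6, f, Fin.sum_univ_succ, Matrix.cons_val_zero, Matrix.cons_val_succ, Pi.smul_apply, smul_eq_mul]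
lemma gv4v1 : B v4 v1 = (1/7) := by rw [B_comm]; exact gv1v4
lemma gv4v2 : B v4 v2 = (0) := by rw [B_comm]; exact gv2v4
lemma gv4v3 : B v4 v3 = (1/7) := by rw [B_comm]; exact gv3v4
lemma gv4v4 : B v4 v4 = (4/7) := by
  norm_num [B, v1, v2, v3, v4, v5, v6, f, Fin.sum_univ_succ, Matrix.cons_val_zero, Matrix.cons_val_succ, Pi.smul_apply, smul_eq_mul]
lemma gv4v5 : B v4 v5 = (0) := by
  norm_num [B, v1, v2, v3, v4, v5, v6, f, Fin.sum_univ_succ, Matrix.cons_val_zero, Matrix.cons_val_succ, Pi.smul_apply, smul_eq_mul]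
lemma gv4v6 : B v4 v6 = (2/7) := by
  norm_num [B, v1, v2, v3, v4, v5, v6, f, Fin.sum_univ_succ, Matrix.cons_val_zero, Matrix.cons_val_succ, Pi.smul_apply, smul_eq_mul]
lemma gv4f : B v4 f = (-1/7) := by
  norm_num [B, v1, v2, v3, v4, v5, v6, f, Fin.sum_univ_succ, Matrix.cons_val_zero, Matrix.cons_val_succ, Pi.smul_apply, smul_eq_mul]
lemma gv5v1 : B v5 v1 = (1/7) := by rw [B_comm]; exact gv1v5
lemma gv5v2 : B v5 v2 = (1/7) := by rw [B_comm]; exact gv2v5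
lemma gv5v3 : B v5 v3 = (-1/7) := by rw [B_comm]; exact gv3v5
lemma gv5v4 : B v5 v4 = (0) := by rw [B_comm]; exact gv4v5
lemma gv5v5 : B v5 v5 = (4/7) := by
  norm_num [B, v1, v2, v3, v4, v5, v6, f, Fin.sum_univ_succ, Matrix.cons_val_zero, Matrix.cons_val_succ, Pi.smul_apply, smul_eq_mul]
lemma gv5v6 : B v5 v6 = (2/7) := by
  norm_num [B, v1, v2, v3, v4, v5, v6, f, Fin.sum_univ_succ, Matrix.cons_val_zero, Matrix.cons_val_succ, Pi.smul_apply, smul_eq_mul]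
lemma gv5f : B v5 f = (0) := by
  norm_num [B, v1, v2, v3, v4, v5, v6, f, Fin.sum_univ_succ, Matrix.cons_val_zero, Matrix.cons_val_succ, Pi.smul_apply, smul_eq_mul]
lemma gv6v1 : B v6 v1 = (1/7) := by rw [B_comm]; exact gv1v6
lemma gv6v2 : B v6 v2 = (-1/7) := by rw [B_comm]; exact gv2v6
lemma gv6v3 : B v6 v3 = (0) := by rw [B_comm]; exact gv3v6
lemma gv6v4 : B v6 v4 = (2/7) := by rw [B_comm]; exact gv4v6
lemma gv6v5 : B v6 v5 = (2/7) := by rw [B_comm]; exact gv5v6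
lemma gv6v6 : B v6 v6 = (4/7) := by
  norm_num [B, v1, v2, v3, v4, v5, v6, f, Fin.sum_univ_succ, Matrix.cons_val_zero, Matrix.cons_val_succ, Pi.smul_apply, smul_eq_mul]
lemma gv6f : B v6 f = (-2/7) := by
  norm_num [B, v1, v2, v3, v4, v5, v6, f, Fin.sum_univ_succ, Matrix.cons_val_zero, Matrix.cons_val_succ, Pi.smul_apply, smul_eq_mul]
lemma gfv1 : B f v1 = (1/7) := by rw [B_comm]; exact gv1f
lemma gfv2 : B f v2 = (2/7) := by rw [B_comm]; exact gv2f
lemma gfv3 : B f v3 = (0) := by rw [B_comm]; exact gv3f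
lemma gfv4 : B f v4 = (-1/7) := by rw [B_comm]; exact gv4f
lemma gfv5 : B f v5 = (0) := by rw [B_comm]; exact gv5f
lemma gfv6 : B f v6 = (-2/7) := by rw [B_comm]; exact gv6f
lemma gff : B f f = (2/7) := by
  norm_num [B, v1, v2, v3, v4, v5, v6, f, Fin.sum_univ_succ, Matrix.cons_val_zero, Matrix.cons_val_succ, Pi.smul_apply, smul_eq_mul]
lemma B_add_right (x y z : Fin 24 → ℚ) : B x (y + z) = B x y + B x z := by
  rw [B_comm x (y + z), B_add_left, B_comm y x, B_comm z x]

lemma B_smul_right (a : ℚ) (x z : Fin 24 → ℚ) : B x (a • z) = a * B x z := by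
  rw [B_comm x (a • z), B_smul_left, B_comm z x]

lemma B_zsmul_right (n : ℤ) (x z : Fin 24 → ℚ) : B x (n • z) = (n:ℚ) * B x z := by
  rw [B_comm x (n • z), B_zsmul_left, B_comm z x]

lemma B_nonneg (y : Fin 24 → ℚ) : 0 ≤ B y y := by
  unfold B
  apply mul_nonneg (by norm_num)
  exact Finset.sum_nonneg fun i _ => mul_self_nonneg _

lemma B_eq_zero_apply {y : Fin 24 → ℚ} (h : B y y = 0) : y 0 = 0 := by
  unfold B at h
  have h8 : ∑ i, y i * y i = 0 := by linarith
  have := (Finset.sum_eq_zero_iff_of_nonneg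
    (fun i _ => mul_self_nonneg (y i))).mp h8 0 (Finset.mem_univ 0)
  exact mul_self_eq_zero.mp this

lemma key (V : ℚ) (m k n r' : ℤ) (h7 : ¬ (7:ℤ) ∣ 5 * r')
    (hV : V = (2*(m:ℚ) + 2*(r':ℚ)*(k:ℚ) + 2*(r':ℚ)^2)/7)
    (hpos : 0 ≤ V)
    (hzero : V = 0 → (n:ℚ) + (r':ℚ) * (5/7) = 0) : 2/7 ≤ V := by
  have hVs : V = 2*((m + r'*k + r'^2 : ℤ):ℚ)/7 := by rw [hV]; push_cast; ring
  set s : ℤ := m + r'*k + r'^2 with hs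
  have hs0 : (0:ℤ) ≤ s := by
    have : (0:ℚ) ≤ (s:ℚ) := by rw [hVs] at hpos; linarith
    exact_mod_cast this
  rcases eq_or_lt_of_le hs0 with h0 | h1
  · exfalso
    have hV0 : V = 0 := by rw [hVs, ← h0]; norm_num
    have hz := hzero hV0
    have hzz : ((7*n + 5*r' : ℤ):ℚ) = 0 := by push_cast; linarith
    have hi : (7*n + 5*r' : ℤ) = 0 := by exact_mod_cast hzz
    exact h7 ⟨-n, by linarith⟩
  · have : (1:ℚ) ≤ (s:ℚ) := by exact_mod_cast h1
    rw [hVs]; linarith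

set_option maxRecDepth 10000 in
set_option maxHeartbeats 2000000 in
theorem stmt5 :
    ∀ x ∈ L, ∀ r : ℚ, r ∈ ({1, 2, 3, -1, -2, -3} : Set ℚ) →
      2/7 ≤ B (x + r • f) (x + r • f) := by
  intro x hx r hr
  have hrange : ({v1, v2, v3, v4, v5, v6} : Set (Fin 24 → ℚ))
      = Set.range ![v1, v2, v3, v4, v5, v6] := by
    rw [Matrix.range_cons, Matrix.range_cons, Matrix.range_cons, Matrix.range_cons,
      Matrix.range_cons, Matrix.range_cons_empty]
    simp only [Set.singleton_union]
  rw [L, hrange, Submodule.mem_span_range_iff_exists_fun] at hx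
  obtain ⟨c, hc⟩ := hx
  simp only [Fin.sum_univ_six, Matrix.cons_val_zero, Matrix.cons_val_one, Matrix.head_cons,
    Matrix.cons_val_succ] at hc
  subst hc
  have hV : B ((c 0 • v1 + c 1 • v2 + c 2 • v3 + c 3 • v4 + c 4 • v5 + c 5 • v6) + r • f)
        ((c 0 • v1 + c 1 • v2 + c 2 • v3 + c 3 • v4 + c 4 • v5 + c 5 • v6) + r • f)
      = (2*((2*(c 0^2 + c 1^2 + c 2^2 + c 3^2 + c 4^2 + c 5^2)
            + 2*c 0*c 1 + c 0*c 3 + c 0*c 4 + c 0*c 5 - 2*c 1*c 2 + c 1*c 4 - c 1*c 5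
            + c 2*c 3 - c 2*c 4 + 2*c 3*c 5 + 2*c 4*c 5 : ℤ):ℚ)
         + 2*r*(((c 0 + 2*c 1 - c 3 - 2*c 5 : ℤ)):ℚ) + 2*r^2)/7 := by
    simp only [B_add_left, B_add_right, B_zsmul_left, B_zsmul_right, B_smul_left, B_smul_right,
      gv1v1, gv1v2, gv1v3, gv1v4, gv1v5, gv1v6, gv1f,
      gv2v1, gv2v2, gv2v3, gv2v4, gv2v5, gv2v6, gv2f,
      gv3v1, gv3v2, gv3v3, gv3v4, gv3v5, gv3v6, gv3f,
      gv4v1, gv4v2, gv4v3, gv4v4, gv4v5, gv4v6, gv4f,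
      gv5v1, gv5v2, gv5v3, gv5v4, gv5v5, gv5v6, gv5f,
      gv6v1, gv6v2, gv6v3, gv6v4, gv6v5, gv6v6, gv6f,
      gfv1, gfv2, gfv3, gfv4, gfv5, gfv6, gff]
    push_cast
    ring
  set y := (c 0 • v1 + c 1 • v2 + c 2 • v3 + c 3 • v4 + c 4 • v5 + c 5 • v6) + r • f with hy
  have hpos : 0 ≤ B y y := B_nonneg y
  have hzero : B y y = 0 → ((-2 * c 3 - c 5 : ℤ):ℚ) + r * (5/7) = 0 := by
    intro h0
    have h1 := B_eq_zero_apply h0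
    rw [hy] at h1
    simp only [Pi.add_apply, Pi.smul_apply, Pi.mul_apply, Pi.intCast_apply, zsmul_eq_mul,
      smul_eq_mul, v1, v2, v3, v4, v5, v6, f, Matrix.cons_val_zero] at h1
    push_cast
    -- h1 is already cast-normalized
    linarith
  rcases hr with rfl | rfl | rfl | rfl | rfl | rfl
  · exact key _ _ _ _ 1 (by decide) (by exact_mod_cast hV) hpos (by exact_mod_cast hzero)
  · exact key _ _ _ _ 2 (by decide) (by exact_mod_cast hV) hpos (by exact_mod_cast hzero)
  · exact key _ _ _ _ 3 (by decide) (by exact_mod_cast hV) hpos (by exact_mod_cast hzero)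
  · exact key _ _ _ _ (-1) (by decide) (by exact_mod_cast hV) hpos (by exact_mod_cast hzero)
  · exact key _ _ _ _ (-2) (by decide) (by exact_mod_cast hV) hpos (by exact_mod_cast hzero)
  · exact key _ _ _ _ (-3) (by decide) (by exact_mod_cast hV) hpos (by exact_mod_cast hzero)
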